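/- Let (H, R) be a quasitriangular bialgebra over a field k. Then H*_R is quantum commutative as a left H-module algebra, i.e. f·g = Σ (R²⇀g)·(R¹⇀f) for all f, g ∈ H*, if and only if R = 1⊗1. -/

import Mathlib

open TensorProduct LinearMap

noncomputable section

section RegularActions

variable {k H : Type*} [Field k] [Ring H] [Algebra k H]

/-- Left regular action of `H` on its dual: `(h ⇀ p)(x) = p (x * h)`. -/
def lact (h : H) (p : Module.Dual k H) : Module.Dual k H :=
  p ∘ₗ LinearMap.mulRight k h

/-- Right regular action of `H` on its dual: `(p ↼ h)(x) = p (h * x)`. -/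
def ract (h : H) (p : Module.Dual k H) : Module.Dual k H :=
  p ∘ₗ LinearMap.mulLeft k h

end RegularActions

section Legs

variable (k H : Type*) [Field k] [Ring H] [Algebra k H]

/-- `R ⊗ 1` viewed in `H ⊗ (H ⊗ H)` (the element `R₁₂`). -/
def leg12 (R : H ⊗[k] H) : H ⊗[k] (H ⊗[k] H) :=
  TensorProduct.assoc k H H H (R ⊗ₜ[k] (1 : H))

/-- The element `R₂₃ = 1 ⊗ R` of `H ⊗ (H ⊗ H)`. -/
def leg23 (R : H ⊗[k] H) : H ⊗[k] (H ⊗[k] H) := (1 : H) ⊗ₜ[k] R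

/-- The element `R₁₃` of `H ⊗ (H ⊗ H)`. -/
def leg13 (R : H ⊗[k] H) : H ⊗[k] (H ⊗[k] H) :=
  lTensor H (TensorProduct.comm k H H).toLinearMap (leg12 k H R)

end Legs

section QuasiTriangular

variable (k H : Type*) [Field k] [Ring H] [Bialgebra k H]

/-- `R` is an R-matrix making the bialgebra `H` quasitriangular:
`R` is invertible, `(Δ ⊗ id)(R) = R₁₃ R₂₃`, `(id ⊗ Δ)(R) = R₁₃ R₁₂`, and
`Δᶜᵒᵖ(h) R = R Δ(h)` for all `h`. -/
def IsRMatrix (R : H ⊗[k] H) : Prop :=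
  IsUnit R
  ∧ TensorProduct.assoc k H H H
      (rTensor H (Coalgebra.comul (R := k) (A := H)) R) = leg13 k H R * leg23 k H R
  ∧ lTensor H (Coalgebra.comul (R := k) (A := H)) R = leg13 k H R * leg12 k H R
  ∧ ∀ h : H, (TensorProduct.comm k H H) (Coalgebra.comul h) * R = R * Coalgebra.comul h

variable {k H}

/-- The convolution product on `H*`: `(f g)(h) = Σ f(h₁) g(h₂)`. -/
def conv (f g : Module.Dual k H) : Module.Dual k H :=
  LinearMap.mul' k k ∘ₗ TensorProduct.map f g ∘ₗ (Coalgebra.comul (R := k) (A := H))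

/-- The multiplication of `H*_R`: `(f · g)(h) = Σ g(h₁ R²) f(h₂ R¹)`,
i.e. `f · g = Σ (R² ⇀ g)(R¹ ⇀ f)`. -/
def mulR (R : H ⊗[k] H) (f g : Module.Dual k H) : Module.Dual k H :=
  LinearMap.mul' k k ∘ₗ TensorProduct.map g f
    ∘ₗ LinearMap.mulRight k ((TensorProduct.comm k H H) R)
    ∘ₗ (Coalgebra.comul (R := k) (A := H))

/-- The map `Q : H* → H`, `Q(p) = Σ p(R² r¹) R¹ r²`, i.e. `Q(p) = (p ⊗ id)(R₂₁ R)`. -/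
def Qmap (R : H ⊗[k] H) : Module.Dual k H →ₗ[k] H :=
  (TensorProduct.lid k H).toLinearMap
    ∘ₗ rTensor H (contractLeft k H)
    ∘ₗ (TensorProduct.assoc k (Module.Dual k H) H H).symm.toLinearMap
    ∘ₗ (TensorProduct.mk k (Module.Dual k H) (H ⊗[k] H)).flip
        ((TensorProduct.comm k H H) R * R)

end QuasiTriangular

lemma exists_fin_rep {k H : Type*} [Field k] [Ring H] [Algebra k H] (x : H ⊗[k] H) :
    ∃ (n : ℕ) (R₁ R₂ : Fin n → H), x = ∑ i, R₁ i ⊗ₜ[k] R₂ i := by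
  induction x using TensorProduct.induction_on with
  | zero => exact ⟨0, ![], ![], by simp⟩
  | tmul u v => exact ⟨1, ![u], ![v], by simp⟩
  | add u v hu hv =>
    obtain ⟨p, a, c, ha⟩ := hu
    obtain ⟨q, a', c', ha'⟩ := hv
    refine ⟨p + q, Fin.append a a', Fin.append c c', ?_⟩
    rw [Fin.sum_univ_add]
    simp only [Fin.append_left, Fin.append_right]
    rw [← ha, ← ha']

/-- Let `(H, R)` be a quasitriangular bialgebra over a field `k`.
Then `H*_R` is quantum commutative as a left `H`-module algebra, i.e.
`f·g = Σ (R² ⇀ g) · (R¹ ⇀ f)` for all `f, g ∈ H*` (the Sweedler sum running over any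
finite representation of `R`), if and only if `R = 1 ⊗ 1`. -/
theorem quantum_commutative_iff_R_trivial
    {k H : Type*} [Field k] [Ring H] [Bialgebra k H]
    (R : H ⊗[k] H) (hR : IsRMatrix k H R) :
    (∀ (f g : Module.Dual k H) (n : ℕ) (R₁ R₂ : Fin n → H),
        R = ∑ i, R₁ i ⊗ₜ[k] R₂ i →
        mulR R f g = ∑ i, mulR R (lact (R₂ i) g) (lact (R₁ i) f))
      ↔ R = 1 := by
  classical
  set S := (TensorProduct.comm k H H) R with hS
  -- helper: separation by pure tensor functionals
  have sep : ∀ x y : H ⊗[k] H,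
      (∀ f g : Module.Dual k H,
        LinearMap.mul' k k (TensorProduct.map f g x)
          = LinearMap.mul' k k (TensorProduct.map f g y)) → x = y := by
    intro x y hxy
    let b : Module.Basis _ k H := Module.Basis.ofVectorSpace k H
    let B := b.tensorProduct b
    have key : ∀ (t : H ⊗[k] H) i j,
        B.repr t (i, j) = LinearMap.mul' k k (TensorProduct.map (b.coord i) (b.coord j) t) := by
      intro t i j
      induction t using TensorProduct.induction_on with
      | zero => simp
      | tmul u v => simp [B, Module.Basis.tensorProduct_repr_tmul_apply, smul_eq_mul, mul_comm,
          Module.Basis.coord_apply]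
      | add u v hu hv => simp [map_add, hu, hv]
    apply B.repr.injective
    ext ⟨i, j⟩
    rw [key, key, hxy]
  -- helper: swapping legs under mul'
  have swap : ∀ (f g : Module.Dual k H) (x : H ⊗[k] H),
      LinearMap.mul' k k (TensorProduct.map f g x)
        = LinearMap.mul' k k (TensorProduct.map g f ((TensorProduct.comm k H H) x)) := by
    intro f g x
    induction x using TensorProduct.induction_on with
    | zero => simp
    | tmul u v => simp [mul_comm]
    | add u v hu hv => simp [map_add, hu, hv]
  have comm_comm : ∀ x : H ⊗[k] H,
      (TensorProduct.comm k H H) ((TensorProduct.comm k H H) x) = x := by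
    intro x
    induction x using TensorProduct.induction_on with
    | zero => simp
    | tmul u v => simp
    | add u v hu hv => simp [map_add, hu, hv]
  have comm_one : (TensorProduct.comm k H H) (1 : H ⊗[k] H) = 1 := by
    rw [Algebra.TensorProduct.one_def, TensorProduct.comm_tmul]
  -- helper: key commutation for lact
  have lact_map : ∀ (a b : H) (φ ψ : Module.Dual k H),
      TensorProduct.map (lact a φ) (lact b ψ)
        = (TensorProduct.map φ ψ) ∘ₗ LinearMap.mulRight k (a ⊗ₜ[k] b) := by
    intro a b φ ψ
    refine TensorProduct.ext' fun x y => ?_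
    simp [lact, Algebra.TensorProduct.tmul_mul_tmul]
  -- value of mulR at a point
  have mulR_apply : ∀ (T : H ⊗[k] H) (f g : Module.Dual k H) (h : H),
      mulR T f g h = LinearMap.mul' k k (TensorProduct.map g f
        ((Coalgebra.comul (R := k) h) * (TensorProduct.comm k H H) T)) := by
    intro T f g h
    simp [mulR, LinearMap.mulRight_apply]
  constructor
  · intro hqc
    -- choose a finite representation of R
    obtain ⟨n, R₁, R₂, hrep⟩ := exists_fin_rep R
    have key : R = S * R := by
      apply sep
      intro f g
      have h1 := hqc f g n R₁ R₂ hrep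
      have h2 := congrFun (congrArg (fun (p : Module.Dual k H) => p.toFun) h1) 1
      simp only [LinearMap.toFun_eq_coe] at h2
      rw [mulR_apply] at h2
      rw [LinearMap.sum_apply] at h2
      have h3 : ∀ i, mulR R (lact (R₂ i) g) (lact (R₁ i) f) (1 : H)
          = LinearMap.mul' k k (TensorProduct.map f g (S * (R₁ i ⊗ₜ[k] R₂ i))) := by
        intro i
        rw [mulR_apply, lact_map]
        simp [LinearMap.mulRight_apply, hS]
      rw [Finset.sum_congr rfl (fun i _ => h3 i)] at h2
      have h4 : (∑ i, LinearMap.mul' k k (TensorProduct.map f g (S * (R₁ i ⊗ₜ[k] R₂ i))))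
          = LinearMap.mul' k k (TensorProduct.map f g (S * R)) := by
        rw [hrep, Finset.mul_sum, map_sum, map_sum]
      rw [h4] at h2
      have h5 : LinearMap.mul' k k (TensorProduct.map g f
          ((Coalgebra.comul (R := k) (1 : H)) * S))
          = LinearMap.mul' k k (TensorProduct.map f g R) := by
        rw [Bialgebra.comul_one, one_mul, ← comm_comm R, ← hS, swap g f]
      rw [h5] at h2
      exact h2
    have hSone : S = 1 := by
      have : S * R = 1 * R := by rw [← key, one_mul]
      exact hR.1.mul_right_cancel this
    rw [← comm_comm R, ← hS, hSone, comm_one]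
  · intro hR1
    subst hR1
    have cocomm : ∀ h : H, (TensorProduct.comm k H H) (Coalgebra.comul (R := k) h)
        = Coalgebra.comul (R := k) h := by
      intro h
      have := hR.2.2.2 h
      simpa using this
    intro f g n R₁ R₂ hrep
    apply LinearMap.ext
    intro h
    rw [mulR_apply, LinearMap.sum_apply]
    have h3 : ∀ i, mulR (1 : H ⊗[k] H) (lact (R₂ i) g) (lact (R₁ i) f) h
        = LinearMap.mul' k k (TensorProduct.map f g
            ((Coalgebra.comul (R := k) h) * (R₁ i ⊗ₜ[k] R₂ i))) := by
      intro i
      rw [mulR_apply, lact_map]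
      simp [LinearMap.mulRight_apply, comm_one]
    rw [Finset.sum_congr rfl (fun i _ => h3 i)]
    have h4 : (∑ i, LinearMap.mul' k k (TensorProduct.map f g
          ((Coalgebra.comul (R := k) h) * (R₁ i ⊗ₜ[k] R₂ i))))
        = LinearMap.mul' k k (TensorProduct.map f g (Coalgebra.comul (R := k) h)) := by
      rw [← map_sum, ← map_sum, ← Finset.mul_sum, ← hrep, mul_one]
    rw [h4, comm_one, mul_one, swap g f, cocomm]
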